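/- Let M = [[A, b],[cᵀ, 0]] where A is invertible with A⁻¹ ≤ 0 entrywise, b, c ≤ 0, and suppose there exists a nonzero y = (w, λ) ≥ 0 in ℝⁿ⁺¹ with −Mᵀy ≤ 0. Then c = 0. -/

import Mathlib

open Matrix

/-- For `M = [[A, b],[cᵀ, 0]]` with `A⁻¹ ≤ 0`, `b, c ≤ 0`: if there is a nonzero
`y = (w, λ) ≥ 0` with `Mᵀ y ≥ 0`, then `c = 0`. -/
theorem stmt_12 (n : ℕ) (A : Matrix (Fin n) (Fin n) ℝ)
    (hAinv : IsUnit A.det)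
    (hAneg : ∀ i j, A⁻¹ i j ≤ 0)
    (b c : Fin n → ℝ) (hb : ∀ i, b i ≤ 0) (hc : ∀ i, c i ≤ 0)
    (M : Matrix (Fin n ⊕ Fin 1) (Fin n ⊕ Fin 1) ℝ)
    (hM : M = Matrix.fromBlocks A (fun i _ => b i) (fun _ j => c j) 0)
    (w : Fin n → ℝ) (lam : ℝ) (y : Fin n ⊕ Fin 1 → ℝ)
    (hy : y = Sum.elim w (fun _ => lam))
    (hynn : ∀ i, 0 ≤ y i) (hyne : y ≠ 0)
    (hMty : ∀ i, 0 ≤ (Mᵀ *ᵥ y) i) :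
    c = 0 := by
  have hwnn : ∀ i, 0 ≤ w i := fun i => by simpa [hy] using hynn (Sum.inl i)
  have hlam : 0 ≤ lam := by simpa [hy] using hynn (Sum.inr 0)
  -- key inequality at inl i : 0 ≤ (Aᵀ *ᵥ w) i + c i * lam
  have hkey : ∀ i, 0 ≤ (Aᵀ *ᵥ w) i + c i * lam := by
    intro i
    have := hMty (Sum.inl i)
    simp [hM, hy, fromBlocks_transpose, fromBlocks_mulVec, mulVec, dotProduct,
      Fin.sum_univ_one] at this
    simp only [fromBlocks, of_apply, Sum.elim_inl, Sum.elim_inr] at this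
    exact this
  have hv : ∀ i, 0 ≤ (Aᵀ *ᵥ w) i := by
    intro i
    have h1 : c i * lam ≤ 0 := mul_nonpos_of_nonpos_of_nonneg (hc i) hlam
    linarith [hkey i]
  have hAt : IsUnit (Aᵀ).det := by simpa [Matrix.det_transpose] using hAinv
  have hw0 : w = 0 := by
    have hwe : w = (Aᵀ)⁻¹ *ᵥ (Aᵀ *ᵥ w) := by
      rw [Matrix.mulVec_mulVec, Matrix.nonsing_inv_mul _ hAt, Matrix.one_mulVec]
    funext i
    have hle : w i ≤ 0 := by
      rw [hwe]
      have : ((Aᵀ)⁻¹ *ᵥ (Aᵀ *ᵥ w)) i = ∑ j, A⁻¹ j i * (Aᵀ *ᵥ w) j := by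
        rw [← Matrix.transpose_nonsing_inv]
        simp [mulVec, dotProduct, Matrix.transpose_apply]
      rw [this]
      exact Finset.sum_nonpos fun j _ =>
        mul_nonpos_of_nonpos_of_nonneg (hAneg j i) (hv j)
    exact le_antisymm hle (hwnn i)
  have hlampos : 0 < lam := by
    rcases lt_or_eq_of_le hlam with h | h
    · exact h
    · exfalso; apply hyne; funext i
      cases i with
      | inl i => simp [hy, hw0]
      | inr i => simp [hy, ← h]
  funext i
  have h2 : 0 ≤ c i * lam := by
    have := hkey i
    simpa [hw0] using this
  have : 0 ≤ c i := by nlinarith [hc i]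
  exact le_antisymm (hc i) this
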